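/- Let H be a Hilbert space of holomorphic functions on a domain Ω ⊂ ℂ with reproducing kernels k_z, and fix z ∈ Ω. If f ∈ H is orthogonal to the function w ↦ (d/dρ)ⁿ|_{ρ=1} k_z(ρw) for all n ≥ 0, and these derivatives exist in H, and the pairing gives ⟨f, (d/dρ)ⁿ|_{ρ=1} k_z(ρ·)⟩ = (d/dρ)ⁿ|_{ρ=1} [ρ^{−2} f(z/ρ)] in the sector case, then f^{(n)}(z) = 0 for all n ≥ 0, and hence f = 0 by the identity theorem. -/

import Mathlib

open Real Complex Set

/-- The wedge (sector) of aperture `α`. -/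
def Wedge (α : ℝ) : Set ℂ := {z : ℂ | z ≠ 0 ∧ |Complex.arg z| < α / 2}

lemma wedge_isOpen (α : ℝ) (hα2 : α < 2 * π) : IsOpen (Wedge α) := by
  rw [isOpen_iff_mem_nhds]
  rintro z ⟨hz0, hzarg⟩
  have hπ : |Complex.arg z| < π := lt_of_lt_of_le hzarg (by linarith [Real.pi_pos])
  have hslit : z ∈ Complex.slitPlane := by
    rw [Complex.mem_slitPlane_iff_arg]
    exact ⟨fun h => by simp [h, _root_.abs_of_nonneg Real.pi_pos.le] at hπ, hz0⟩
  have hc : ContinuousAt (fun w : ℂ => |Complex.arg w|) z :=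
    (Complex.continuousAt_arg hslit).abs
  have h1 : {w : ℂ | |Complex.arg w| < α / 2} ∈ nhds z :=
    hc.preimage_mem_nhds (Iio_mem_nhds hzarg)
  have h2 : {w : ℂ | w ≠ 0} ∈ nhds z := by
    have : IsOpen {w : ℂ | w ≠ 0} := isOpen_compl_singleton
    exact this.mem_nhds hz0
  filter_upwards [h1, h2] with w hw1 hw2
  exact ⟨hw2, hw1⟩

lemma wedge_preconnected (α : ℝ) (hα2 : α < 2 * π) : IsPreconnected (Wedge α) := by
  have hπ2 : α / 2 < π := by linarith
  have himg : Wedge α =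
      (fun p : ℝ × ℝ => (p.1 : ℂ) * Complex.exp (p.2 * Complex.I)) ''
        (Ioi (0:ℝ) ×ˢ Ioo (-(α/2)) (α/2)) := by
    ext w
    constructor
    · rintro ⟨hw0, hwarg⟩
      rw [abs_lt] at hwarg
      exact ⟨(‖w‖, Complex.arg w),
        ⟨norm_pos_iff.mpr hw0, hwarg.1, hwarg.2⟩, Complex.norm_mul_exp_arg_mul_I w⟩
    · rintro ⟨⟨r, θ⟩, ⟨hr, hθ1, hθ2⟩, rfl⟩
      simp only [mem_Ioi] at hr
      have hθπ : θ ∈ Set.Ioc (-π) π := ⟨by linarith, by linarith⟩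
      have harg : Complex.arg ((r : ℂ) * Complex.exp (θ * Complex.I)) = θ := by
        rw [Complex.arg_real_mul _ hr, Complex.exp_mul_I,
          Complex.arg_cos_add_sin_mul_I hθπ]
      refine ⟨mul_ne_zero (by exact_mod_cast hr.ne') (Complex.exp_ne_zero _), ?_⟩
      rw [harg, abs_lt]; exact ⟨hθ1, hθ2⟩
  rw [himg]
  exact (((convex_Ioi (0:ℝ)).prod (convex_Ioo _ _)).isPreconnected).image _
    (by fun_prop)

lemma real_iter_eq (U : Set ℂ) (hU : IsOpen U) :
    ∀ (n : ℕ) (F : ℂ → ℂ), AnalyticOnNhd ℂ F U → ∀ x : ℝ, (x : ℂ) ∈ U →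
      iteratedDeriv n (fun ρ : ℝ => F ρ) x = iteratedDeriv n F x := by
  intro n
  induction n with
  | zero => intro F _ x _; simp
  | succ n ih =>
    intro F hF x hx
    rw [iteratedDeriv_succ', iteratedDeriv_succ']
    have hev : deriv (fun ρ : ℝ => F ρ) =ᶠ[nhds x] fun ρ : ℝ => deriv F ρ := by
      have hVo : IsOpen ((fun ρ : ℝ => (ρ : ℂ)) ⁻¹' U) :=
        hU.preimage Complex.continuous_ofReal
      filter_upwards [hVo.mem_nhds hx] with y hy
      exact ((hF _ hy).differentiableAt.hasDerivAt.comp_ofReal).deriv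
    rw [hev.iteratedDeriv_eq n]
    exact ih (deriv F) hF.deriv x hx

theorem wedge_kernel_cyclic (α : ℝ) (hα : 0 < α) (hα2 : α < 2 * π)
    (f : ℂ → ℂ) (hf : DifferentiableOn ℂ f (Wedge α))
    (z : ℂ) (hz : z ∈ Wedge α)
    (horth : ∀ n : ℕ,
      iteratedDeriv n (fun ρ : ℝ => ((ρ : ℂ)) ^ (-2 : ℤ) * f (z / (ρ : ℂ))) 1 = 0) :
    (∀ n : ℕ, iteratedDeriv n f z = 0) ∧ ∀ w ∈ Wedge α, f w = 0 := by
  have hWo := wedge_isOpen α hα2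
  have hz0 : z ≠ 0 := hz.1
  set U : Set ℂ := {ζ : ℂ | ζ ≠ 0 ∧ z / ζ ∈ Wedge α} with hUdef
  have hUo : IsOpen U := by
    have heq : U = {(0:ℂ)}ᶜ ∩ (fun ζ : ℂ => z / ζ) ⁻¹' Wedge α := by
      ext ζ; simp [hUdef]
    rw [heq]
    refine ContinuousOn.isOpen_inter_preimage ?_ isOpen_compl_singleton hWo
    intro ζ hζ
    exact (continuousAt_const.div continuousAt_id hζ).continuousWithinAt
  have h1U : (1 : ℂ) ∈ U := ⟨one_ne_zero, by simpa using hz⟩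
  set F : ℂ → ℂ := fun ζ => ζ ^ (-2 : ℤ) * f (z / ζ) with hFdef
  have hFdiff : DifferentiableOn ℂ F U := by
    rintro ζ ⟨hζ0, hζw⟩
    refine DifferentiableAt.differentiableWithinAt (DifferentiableAt.mul ?_ ?_)
    · exact differentiableAt_zpow.mpr (Or.inl hζ0)
    · exact (hf.differentiableAt (hWo.mem_nhds hζw)).comp ζ
        ((differentiableAt_const z).div differentiableAt_id hζ0)
  have hFan : AnalyticOnNhd ℂ F U := hFdiff.analyticOnNhd hUo
  have hFder : ∀ n, iteratedDeriv n F 1 = 0 := by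
    intro n
    have h := real_iter_eq U hUo n F hFan 1 (by simpa using h1U)
    rw [Complex.ofReal_one] at h
    rw [← h]
    simpa [hFdef] using horth n
  obtain ⟨ε, hε, hball⟩ := Metric.isOpen_iff.mp hUo 1 h1U
  have hFz : ∀ w ∈ Metric.ball (1 : ℂ) ε, F w = 0 := by
    intro w hw
    rw [← Complex.taylorSeries_eq_on_ball' hw (hFdiff.mono hball)]
    simp [hFder]
  have hfz : f =ᶠ[nhds z] 0 := by
    have hcont : ContinuousAt (fun w : ℂ => z / w) z :=
      continuousAt_const.div continuousAt_id hz0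
    have hb : (fun w : ℂ => z / w) ⁻¹' Metric.ball (1 : ℂ) ε ∈ nhds z :=
      hcont.preimage_mem_nhds (by simpa [div_self hz0] using Metric.ball_mem_nhds (1:ℂ) hε)
    have hnz : {w : ℂ | w ≠ 0} ∈ nhds z :=
      (isOpen_compl_singleton).mem_nhds hz0
    filter_upwards [hb, hnz] with w hw hw0
    have h1 : F (z / w) = 0 := hFz _ hw
    have h2 : z / (z / w) = w := by field_simp
    rw [hFdef] at h1
    simp only [h2] at h1
    have h3 : (z / w) ^ (-2 : ℤ) ≠ 0 := zpow_ne_zero _ (div_ne_zero hz0 hw0)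
    show f w = 0
    rcases mul_eq_zero.mp h1 with h | h
    · exact absurd h h3
    · exact h
  constructor
  · intro n
    rw [hfz.iteratedDeriv_eq n]
    have : iteratedDeriv n (fun _ : ℂ => (0 : ℂ)) z = 0 := by
      induction n with
      | zero => simp
      | succ m ihm => rw [iteratedDeriv_succ']; simpa using ihm
    simpa using this
  · intro w hw
    exact (hf.analyticOnNhd hWo).eqOn_zero_of_preconnected_of_eventuallyEq_zero
      (wedge_preconnected α hα2) hz hfz hw
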